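/- Define K_{n,i}(x) = T_{n,i}(x) + T_{n,n+i}(x) for 0 ≤ i ≤ n−1 and K_{n,i}(x) = x·T_{n,i−n}(x) + T_{n,i}(x) for n ≤ i ≤ 2n−1. Then for n ≥ 3 and 0 ≤ i ≤ 2n−1, K_{n,i}(x) = x·Σ_{j=0}^{⌈(n−1)i/n⌉−1} K_{n−1,j}(x) + Σ_{j=⌈(n−1)i/n⌉}^{2n−3} K_{n−1,j}(x), i.e., the K_{n,i} satisfy the same recurrence as the T_{n,i}. -/

import Mathlib

open Polynomial

/-- `f` has only real zeros (every complex zero is real). -/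
def RealRooted (f : Polynomial ℝ) : Prop :=
  ∀ z : ℂ, z ∈ (f.map (algebraMap ℝ ℂ)).roots → z.im = 0

/-- all zeros of `f` are real (counted with multiplicity). -/
def AllRealRoots (f : Polynomial ℝ) : Prop :=
  f.roots.card = f.natDegree

/-- two polynomials are compatible if every nonnegative linear combination
has only real zeros. -/
def Compatible (f g : Polynomial ℝ) : Prop :=
  ∀ c d : ℝ, 0 ≤ c → 0 ≤ d → RealRooted (C c * f + C d * g)

/-- `Interlaces g f` means `g ⪯ f`: both are real-rooted with positive leading
coefficients, and listing the zeros in decreasing order `u` (of `f`) and `v`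
(of `g`), either `deg f = deg g` and `vₙ ≤ uₙ ≤ ⋯ ≤ v₁ ≤ u₁`, or
`deg f = deg g + 1` and `uₙ ≤ vₙ₋₁ ≤ ⋯ ≤ v₁ ≤ u₁`. -/
def Interlaces (g f : Polynomial ℝ) : Prop :=
  0 < f.leadingCoeff ∧ 0 < g.leadingCoeff ∧
  ∃ u v : List ℝ,
    u.Pairwise (· ≥ ·) ∧ v.Pairwise (· ≥ ·) ∧
    f.roots = (u : Multiset ℝ) ∧ g.roots = (v : Multiset ℝ) ∧
    u.length = f.natDegree ∧ v.length = g.natDegree ∧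
    (u.length = v.length ∨ u.length = v.length + 1) ∧
    (∀ (i : ℕ) (hv : i < v.length) (hu : i < u.length),
      v.get ⟨i, hv⟩ ≤ u.get ⟨i, hu⟩) ∧
    (∀ (i : ℕ) (hu : i + 1 < u.length) (hv : i < v.length),
      u.get ⟨i + 1, hu⟩ ≤ v.get ⟨i, hv⟩)

/-- the finite set of type `D` inversion sequences: `e : Fin n → ℕ` with
`e i < 2(i+1)`. -/
def invSeqs (n : ℕ) : Finset (Fin n → ℕ) :=
  ((Finset.univ : Finset (Fin n → Fin (2 * n + 1))).image
      (fun e => fun i => (e i : ℕ))).filter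
    (fun e => ∀ i : Fin n, e i < 2 * ((i : ℕ) + 1))

/-- value of an inversion sequence at (0-indexed) position `i`. -/
def ev {n : ℕ} (e : Fin n → ℕ) (i : ℕ) : ℕ :=
  if h : i < n then e ⟨i, h⟩ else 0

/-- the type `D` ascent statistic:
`asc_D e = χ(e₁ + e₂/2 ≥ 3/2) + #{i ∈ [n-1] : eᵢ/i < eᵢ₊₁/(i+1)}`
(1-indexed). -/
noncomputable def ascD {n : ℕ} (e : Fin n → ℕ) : ℕ :=
  (if 3 ≤ 2 * ev e 0 + ev e 1 then 1 else 0) +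
    ((Finset.Ico 1 n).filter
      (fun i => (i + 1) * ev e (i - 1) < i * ev e i)).card

/-- `exc e = #{i : eᵢ ≥ i}` (1-indexed). -/
noncomputable def excD {n : ℕ} (e : Fin n → ℕ) : ℕ :=
  ((Finset.range n).filter (fun j => j + 1 ≤ ev e j)).card

/-- the affine type `D` ascent statistic:
`ãsc_D e = asc_D e + χ(e_{n-1}/(n-1) + e_n/n < (2n-1)/n)`. -/
noncomputable def affAscD {n : ℕ} (e : Fin n → ℕ) : ℕ :=
  ascD e +
    (if n * ev e (n - 2) + (n - 1) * ev e (n - 1) < (n - 1) * (2 * n - 1)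
      then 1 else 0)

/-- the refined Eulerian polynomial `T_{n,i}(x)` of type `D`. -/
noncomputable def TD (n i : ℕ) : Polynomial ℝ :=
  ∑ e ∈ (invSeqs n).filter (fun e => ev e (n - 1) = i), X ^ ascD e

/-- the refined `q`-Eulerian polynomial `T_{n,i}(x;q)` of type `D`. -/
noncomputable def TqD (n i : ℕ) (q : ℝ) : Polynomial ℝ :=
  ∑ e ∈ (invSeqs n).filter (fun e => ev e (n - 1) = i),
    C q ^ excD e * X ^ ascD e

/-- the refined affine Eulerian polynomial `T̃_{n,i}(x)` of type `D`. -/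
noncomputable def TtD (n i : ℕ) : Polynomial ℝ :=
  ∑ e ∈ (invSeqs n).filter (fun e => ev e (n - 1) = i), X ^ affAscD e

/-- the polynomials `K_{n,i}(x)`. -/
noncomputable def KD (n i : ℕ) : Polynomial ℝ :=
  if i < n then TD n i + TD n (n + i) else X * TD n (i - n) + TD n i


-- Auxiliary lemmas ------------------------------------------------------

lemma mem_invSeqs {n : ℕ} (e : Fin n → ℕ) :
    e ∈ invSeqs n ↔ ∀ i : Fin n, e i < 2 * ((i : ℕ) + 1) := by
  unfold invSeqs
  simp only [Finset.mem_filter, Finset.mem_image, Finset.mem_univ, true_and]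
  constructor
  · rintro ⟨-, h⟩; exact h
  · intro h
    refine ⟨⟨fun i => ⟨e i, ?_⟩, funext fun i => rfl⟩, h⟩
    have h1 := h i
    have h2 : (i : ℕ) + 1 ≤ n := i.2
    omega

lemma ev_snoc_lt {m : ℕ} (e : Fin m → ℕ) (v : ℕ) (k : ℕ) (hk : k < m) :
    ev (Fin.snoc e v : Fin (m + 1) → ℕ) k = ev e k := by
  unfold ev
  rw [dif_pos (by omega : k < m + 1), dif_pos hk]
  have h : (⟨k, by omega⟩ : Fin (m + 1)) = Fin.castSucc ⟨k, hk⟩ := rfl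
  rw [h, Fin.snoc_castSucc]

lemma ev_snoc_last {m : ℕ} (e : Fin m → ℕ) (v : ℕ) :
    ev (Fin.snoc e v : Fin (m + 1) → ℕ) m = v := by
  unfold ev
  rw [dif_pos (by omega : m < m + 1)]
  have h : (⟨m, by omega⟩ : Fin (m + 1)) = Fin.last m := rfl
  rw [h, Fin.snoc_last]

lemma ev_eq_last {m : ℕ} (e : Fin (m + 1) → ℕ) :
    ev e m = e (Fin.last m) := by
  unfold ev
  rw [dif_pos (by omega : m < m + 1)]
  rfl

lemma ascD_snoc {m : ℕ} (hm : 2 ≤ m) (e : Fin m → ℕ) (v : ℕ) :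
    ascD (Fin.snoc e v : Fin (m + 1) → ℕ) =
      ascD e + (if (m + 1) * ev e (m - 1) < m * v then 1 else 0) := by
  unfold ascD
  rw [ev_snoc_lt e v 0 (by omega), ev_snoc_lt e v 1 (by omega)]
  have hIco : Finset.Ico 1 (m + 1) = insert m (Finset.Ico 1 m) := by
    ext k; simp only [Finset.mem_Ico, Finset.mem_insert]; omega
  rw [hIco, Finset.filter_insert]
  have hcongr : (Finset.Ico 1 m).filter
      (fun i => (i + 1) * ev (Fin.snoc e v : Fin (m + 1) → ℕ) (i - 1) <
        i * ev (Fin.snoc e v : Fin (m + 1) → ℕ) i) =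
      (Finset.Ico 1 m).filter (fun i => (i + 1) * ev e (i - 1) < i * ev e i) := by
    apply Finset.filter_congr
    intro k hk
    simp only [Finset.mem_Ico] at hk
    rw [ev_snoc_lt e v (k - 1) (by omega), ev_snoc_lt e v k (by omega)]
  have hlast : ev (Fin.snoc e v : Fin (m + 1) → ℕ) (m - 1) = ev e (m - 1) :=
    ev_snoc_lt e v (m - 1) (by omega)
  have hlast2 : ev (Fin.snoc e v : Fin (m + 1) → ℕ) m = v := ev_snoc_last e v
  rw [hcongr, hlast, hlast2]
  by_cases hc : (m + 1) * ev e (m - 1) < m * v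
  · rw [if_pos hc, if_pos hc,
      Finset.card_insert_of_notMem (by simp [Finset.mem_filter])]
    omega
  · rw [if_neg hc, if_neg hc]
    omega

lemma c_iff (m i j : ℕ) : j < (m * i + m) / (m + 1) ↔ (m + 1) * j < m * i := by
  rw [Nat.lt_iff_add_one_le, Nat.le_div_iff_mul_le (Nat.succ_pos m)]
  have h1 : (j + 1) * (m + 1) = (m + 1) * j + (m + 1) := by ring
  rw [h1]
  generalize (m + 1) * j = p
  generalize m * i = a
  omega

lemma TD_rec (m i : ℕ) (hm : 2 ≤ m) (hi : i ≤ 2 * m + 1) :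
    TD (m + 1) i = X * ∑ j ∈ Finset.range ((m * i + m) / (m + 1)), TD m j +
      ∑ j ∈ Finset.Icc ((m * i + m) / (m + 1)) (2 * m - 1), TD m j := by
  set c := (m * i + m) / (m + 1) with hcdef
  have hc2m : c ≤ 2 * m := by
    have h1 : m * i + m ≤ (m + 1) * (2 * m) := by nlinarith
    calc c ≤ ((m + 1) * (2 * m)) / (m + 1) := Nat.div_le_div_right h1
      _ = 2 * m := Nat.mul_div_cancel_left _ (by omega)
  have hL : TD (m + 1) i = ∑ e ∈ invSeqs m,
      (X : Polynomial ℝ) ^ ascD e *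
        (if (m + 1) * ev e (m - 1) < m * i then X else 1) := by
    unfold TD
    simp only [Nat.add_sub_cancel]
    refine Finset.sum_bij' (fun e _ => (fun k => e (Fin.castSucc k) : Fin m → ℕ))
      (fun e _ => (Fin.snoc e i : Fin (m + 1) → ℕ)) ?_ ?_ ?_ ?_ ?_
    · intro e he
      simp only [Finset.mem_filter] at he
      rw [mem_invSeqs] at he ⊢
      intro k
      exact he.1 (Fin.castSucc k)
    · intro e he
      simp only [Finset.mem_filter]
      constructor
      · rw [mem_invSeqs] at he ⊢
        intro k
        refine Fin.lastCases ?_ (fun k => ?_) k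
        · rw [Fin.snoc_last]
          simp only [Fin.val_last]
          omega
        · rw [Fin.snoc_castSucc]
          simpa using he k
      · rw [ev_eq_last, Fin.snoc_last]
    · intro e he
      simp only [Finset.mem_filter] at he
      funext k
      refine Fin.lastCases ?_ (fun k => ?_) k
      · rw [Fin.snoc_last, ← he.2, ev_eq_last]
      · rw [Fin.snoc_castSucc]
    · intro e he
      funext k
      rw [Fin.snoc_castSucc]
    · intro e he
      simp only [Finset.mem_filter] at he
      have hrepr : e = (Fin.snoc (fun k => e (Fin.castSucc k)) i : Fin (m + 1) → ℕ) := by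
        funext k
        refine Fin.lastCases ?_ (fun k => ?_) k
        · rw [Fin.snoc_last, ← he.2, ev_eq_last]
        · rw [Fin.snoc_castSucc]
      conv_lhs => rw [hrepr]
      rw [ascD_snoc hm, pow_add]
      congr 1
      split_ifs <;> simp
  have hmap : ∀ e ∈ invSeqs m, ev e (m - 1) ∈ Finset.range (2 * m) := by
    intro e he
    rw [mem_invSeqs] at he
    have h1 : m - 1 < m := by omega
    have h2 : ev e (m - 1) = e ⟨m - 1, h1⟩ := by unfold ev; rw [dif_pos h1]
    have h3 := he ⟨m - 1, h1⟩
    simp only [Finset.mem_range]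
    simp only at h3
    omega
  have hfib : ∀ j, ∑ e ∈ (invSeqs m).filter (fun e => ev e (m - 1) = j),
      (X : Polynomial ℝ) ^ ascD e *
        (if (m + 1) * ev e (m - 1) < m * i then X else 1)
      = (if j < c then X else 1) * TD m j := by
    intro j
    rw [TD, Finset.mul_sum]
    apply Finset.sum_congr rfl
    intro e he
    simp only [Finset.mem_filter] at he
    rw [he.2]
    by_cases h : j < c
    · rw [if_pos h, if_pos ((c_iff m i j).mp h), mul_comm]
    · rw [if_neg h, if_neg (fun hh => h ((c_iff m i j).mpr hh)), mul_comm]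
  have hR : X * ∑ j ∈ Finset.range c, TD m j +
      ∑ j ∈ Finset.Icc c (2 * m - 1), TD m j
      = ∑ e ∈ invSeqs m, (X : Polynomial ℝ) ^ ascD e *
          (if (m + 1) * ev e (m - 1) < m * i then X else 1) := by
    rw [← Finset.sum_fiberwise_of_maps_to hmap
      (fun e => (X : Polynomial ℝ) ^ ascD e *
        (if (m + 1) * ev e (m - 1) < m * i then X else 1))]
    have hsplit : ∑ j ∈ Finset.range (2 * m), (if j < c then X else 1) * TD m j
        = X * ∑ j ∈ Finset.range c, TD m j +
          ∑ j ∈ Finset.Icc c (2 * m - 1), TD m j := by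
      rw [← Finset.sum_filter_add_sum_filter_not (Finset.range (2 * m)) (· < c)]
      have e1 : (Finset.range (2 * m)).filter (· < c) = Finset.range c := by
        ext k; simp only [Finset.mem_filter, Finset.mem_range]; omega
      have e2 : (Finset.range (2 * m)).filter (fun j => ¬ j < c) =
          Finset.Icc c (2 * m - 1) := by
        ext k
        simp only [Finset.mem_filter, Finset.mem_range, Finset.mem_Icc]
        omega
      rw [e1, e2]
      congr 1
      · rw [Finset.mul_sum]
        apply Finset.sum_congr rfl
        intro j hj
        simp only [Finset.mem_range] at hj
        rw [if_pos hj]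
      · apply Finset.sum_congr rfl
        intro j hj
        simp only [Finset.mem_Icc] at hj
        rw [if_neg (by omega), one_mul]
    rw [← hsplit]
    apply Finset.sum_congr rfl
    intro j _
    exact (hfib j).symm
  rw [hL, hR]

lemma KD_sum_low (m : ℕ) (a b : ℕ) (hb : b ≤ m) :
    ∑ j ∈ Finset.Ico a b, KD m j =
      (∑ j ∈ Finset.Ico a b, TD m j) +
        ∑ j ∈ Finset.Ico (a + m) (b + m), TD m j := by
  have h1 : ∀ j ∈ Finset.Ico a b, KD m j = TD m j + TD m (m + j) := by
    intro j hj
    simp only [Finset.mem_Ico] at hj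
    rw [KD, if_pos (by omega)]
  rw [Finset.sum_congr rfl h1, Finset.sum_add_distrib,
    Finset.sum_Ico_add (fun j => TD m j) a b m]

lemma KD_sum_high (m : ℕ) (a b : ℕ) :
    ∑ j ∈ Finset.Ico (a + m) (b + m), KD m j =
      X * (∑ j ∈ Finset.Ico a b, TD m j) +
        ∑ j ∈ Finset.Ico (a + m) (b + m), TD m j := by
  have h1 : ∀ j ∈ Finset.Ico (a + m) (b + m), KD m j =
      X * TD m (j - m) + TD m j := by
    intro j hj
    simp only [Finset.mem_Ico] at hj
    rw [KD, if_neg (by omega)]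
  rw [Finset.sum_congr rfl h1, Finset.sum_add_distrib]
  congr 1
  rw [Finset.mul_sum, ← Finset.sum_Ico_add' (fun j => X * TD m (j - m)) a b m]
  apply Finset.sum_congr rfl
  intro x _
  rw [Nat.add_sub_cancel]

/-- The polynomials `K_{n,i}` satisfy the same recurrence as the `T_{n,i}`. -/
theorem K_recurrence (n i : ℕ) (hn : 3 ≤ n) (hi : i ≤ 2 * n - 1) :
    KD n i = X * ∑ j ∈ Finset.range (((n - 1) * i + n - 1) / n), KD (n - 1) j +
      ∑ j ∈ Finset.Icc (((n - 1) * i + n - 1) / n) (2 * n - 3),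
        KD (n - 1) j := by
  obtain ⟨m, rfl⟩ : ∃ m, n = m + 1 := ⟨n - 1, by omega⟩
  have hm : 2 ≤ m := by omega
  simp only [Nat.add_sub_cancel]
  rw [Nat.add_sub_assoc (show 1 ≤ m + 1 by omega) (m * i), Nat.add_sub_cancel]
  rw [show 2 * (m + 1) - 3 = 2 * m - 1 from by omega]
  have hIccIco : ∀ a : ℕ, Finset.Icc a (2 * m - 1) = Finset.Ico a (m + m) := by
    intro a
    ext k
    simp only [Finset.mem_Icc, Finset.mem_Ico]
    omega
  have h2m : m ≤ m + m := by omega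
  by_cases hcase : i < m + 1
  · obtain ⟨c, hcdef⟩ : ∃ c, (m * i + m) / (m + 1) = c := ⟨_, rfl⟩
    rw [hcdef]
    have hcm : c ≤ m := by
      by_contra h
      push_neg at h
      rw [← hcdef] at h
      have h2 := (c_iff m i m).mp h
      have h3 : m * i ≤ m * m := Nat.mul_le_mul_left m (by omega)
      nlinarith
    have hc2 : (m * (m + 1 + i) + m) / (m + 1) = c + m := by
      rw [show m * (m + 1 + i) + m = m * i + m + (m + 1) * m from by ring,
        Nat.add_mul_div_left _ _ (show 0 < m + 1 by omega), hcdef]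
    rw [KD, if_pos hcase, TD_rec m i hm (by omega),
      TD_rec m (m + 1 + i) hm (by omega), hc2, hcdef]
    have hA1 : ∑ j ∈ Finset.range c, TD m j = ∑ j ∈ Finset.Ico 0 c, TD m j := by
      rw [Finset.range_eq_Ico]
    have hA2 : ∑ j ∈ Finset.Icc c (2 * m - 1), TD m j =
        (∑ j ∈ Finset.Ico c m, TD m j) +
          ((∑ j ∈ Finset.Ico m (c + m), TD m j) +
            ∑ j ∈ Finset.Ico (c + m) (m + m), TD m j) := by
      rw [hIccIco, ← Finset.sum_Ico_consecutive (fun j => TD m j) hcm h2m,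
        ← Finset.sum_Ico_consecutive (fun j => TD m j)
          (show m ≤ c + m by omega) (show c + m ≤ m + m by omega)]
    have hA3 : ∑ j ∈ Finset.range (c + m), TD m j =
        ((∑ j ∈ Finset.Ico 0 c, TD m j) + ∑ j ∈ Finset.Ico c m, TD m j) +
          ∑ j ∈ Finset.Ico m (c + m), TD m j := by
      rw [Finset.range_eq_Ico,
        ← Finset.sum_Ico_consecutive (fun j => TD m j) (Nat.zero_le m)
          (show m ≤ c + m by omega),
        ← Finset.sum_Ico_consecutive (fun j => TD m j) (Nat.zero_le c) hcm]
    have hA4 : ∑ j ∈ Finset.Icc (c + m) (2 * m - 1), TD m j =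
        ∑ j ∈ Finset.Ico (c + m) (m + m), TD m j := by
      rw [hIccIco]
    have hB1 : ∑ j ∈ Finset.range c, KD m j =
        (∑ j ∈ Finset.Ico 0 c, TD m j) + ∑ j ∈ Finset.Ico m (c + m), TD m j := by
      rw [Finset.range_eq_Ico, KD_sum_low m 0 c hcm]
      simp only [Nat.zero_add]
    have hB2 : ∑ j ∈ Finset.Icc c (2 * m - 1), KD m j =
        ((∑ j ∈ Finset.Ico c m, TD m j) +
            ∑ j ∈ Finset.Ico (c + m) (m + m), TD m j) +
          (X * ((∑ j ∈ Finset.Ico 0 c, TD m j) + ∑ j ∈ Finset.Ico c m, TD m j) +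
            ((∑ j ∈ Finset.Ico m (c + m), TD m j) +
              ∑ j ∈ Finset.Ico (c + m) (m + m), TD m j)) := by
      rw [hIccIco, ← Finset.sum_Ico_consecutive (fun j => KD m j) hcm h2m,
        KD_sum_low m c m (le_refl m)]
      have hhigh := KD_sum_high m 0 m
      simp only [Nat.zero_add] at hhigh
      rw [hhigh,
        ← Finset.sum_Ico_consecutive (fun j => TD m j) (Nat.zero_le c) hcm,
        ← Finset.sum_Ico_consecutive (fun j => TD m j)
          (show m ≤ c + m by omega) (show c + m ≤ m + m by omega)]
    rw [hA1, hA2, hA3, hA4, hB1, hB2]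
    ring
  · push_neg at hcase
    obtain ⟨i', rfl⟩ : ∃ i', i = m + 1 + i' := ⟨i - (m + 1), by omega⟩
    have hi' : i' ≤ m := by omega
    obtain ⟨c, hcdef⟩ : ∃ c, (m * i' + m) / (m + 1) = c := ⟨_, rfl⟩
    have hcm : c ≤ m := by
      by_contra h
      push_neg at h
      rw [← hcdef] at h
      have h2 := (c_iff m i' m).mp h
      have h3 : m * i' ≤ m * m := Nat.mul_le_mul_left m (by omega)
      nlinarith
    have hc2 : (m * (m + 1 + i') + m) / (m + 1) = c + m := by
      rw [show m * (m + 1 + i') + m = m * i' + m + (m + 1) * m from by ring,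
        Nat.add_mul_div_left _ _ (show 0 < m + 1 by omega), hcdef]
    rw [hc2, KD, if_neg (by omega),
      show m + 1 + i' - (m + 1) = i' from by omega,
      TD_rec m i' hm (by omega), TD_rec m (m + 1 + i') hm (by omega), hc2, hcdef]
    have hA1 : ∑ j ∈ Finset.range c, TD m j = ∑ j ∈ Finset.Ico 0 c, TD m j := by
      rw [Finset.range_eq_Ico]
    have hA2 : ∑ j ∈ Finset.Icc c (2 * m - 1), TD m j =
        (∑ j ∈ Finset.Ico c m, TD m j) +
          ((∑ j ∈ Finset.Ico m (c + m), TD m j) +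
            ∑ j ∈ Finset.Ico (c + m) (m + m), TD m j) := by
      rw [hIccIco, ← Finset.sum_Ico_consecutive (fun j => TD m j) hcm h2m,
        ← Finset.sum_Ico_consecutive (fun j => TD m j)
          (show m ≤ c + m by omega) (show c + m ≤ m + m by omega)]
    have hA3 : ∑ j ∈ Finset.range (c + m), TD m j =
        ((∑ j ∈ Finset.Ico 0 c, TD m j) + ∑ j ∈ Finset.Ico c m, TD m j) +
          ∑ j ∈ Finset.Ico m (c + m), TD m j := by
      rw [Finset.range_eq_Ico,
        ← Finset.sum_Ico_consecutive (fun j => TD m j) (Nat.zero_le m)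
          (show m ≤ c + m by omega),
        ← Finset.sum_Ico_consecutive (fun j => TD m j) (Nat.zero_le c) hcm]
    have hA4 : ∑ j ∈ Finset.Icc (c + m) (2 * m - 1), TD m j =
        ∑ j ∈ Finset.Ico (c + m) (m + m), TD m j := by
      rw [hIccIco]
    have hB3 : ∑ j ∈ Finset.range (c + m), KD m j =
        (((∑ j ∈ Finset.Ico 0 c, TD m j) + ∑ j ∈ Finset.Ico c m, TD m j) +
            ((∑ j ∈ Finset.Ico m (c + m), TD m j) +
              ∑ j ∈ Finset.Ico (c + m) (m + m), TD m j)) +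
          (X * (∑ j ∈ Finset.Ico 0 c, TD m j) +
            ∑ j ∈ Finset.Ico m (c + m), TD m j) := by
      rw [Finset.range_eq_Ico,
        ← Finset.sum_Ico_consecutive (fun j => KD m j) (Nat.zero_le m)
          (show m ≤ c + m by omega),
        KD_sum_low m 0 m (le_refl m)]
      have hhigh := KD_sum_high m 0 c
      simp only [Nat.zero_add] at hhigh ⊢
      rw [hhigh,
        ← Finset.sum_Ico_consecutive (fun j => TD m j) (Nat.zero_le c) hcm,
        ← Finset.sum_Ico_consecutive (fun j => TD m j)
          (show m ≤ c + m by omega) (show c + m ≤ m + m by omega)]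
    have hB4 : ∑ j ∈ Finset.Icc (c + m) (2 * m - 1), KD m j =
        X * (∑ j ∈ Finset.Ico c m, TD m j) +
          ∑ j ∈ Finset.Ico (c + m) (m + m), TD m j := by
      rw [hIccIco, KD_sum_high m c m]
    rw [hA1, hA2, hA3, hA4, hB3, hB4]
    ring
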